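/- Let G = (V,E) be a finite graph with orientation ε, and A, B finite abelian groups of orders p, q. For edge subsets X, Y ⊆ E, the group T_X(G,ε;A) × F_Y(G,ε;B) of tension-flows (f,g) with f vanishing on X and g vanishing on Y has cardinality p^{r(E) − r(X)} · q^{n(E − Y)}. -/

import Mathlib

/-- `f : E → A` is a tension of the digraph `tl, hd : E → V`: it is the
coboundary of a potential `p : V → A`. -/
def IsTension {V E A : Type} [AddCommGroup A] (tl hd : E → V) (f : E → A) : Prop :=
  ∃ p : V → A, ∀ e, f e = p (tl e) - p (hd e)

/-- `g : E → B` is a flow of the digraph `tl, hd : E → V`: conservation holds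
at every vertex. -/
def IsFlow {V E B : Type} [Fintype E] [DecidableEq V] [AddCommGroup B]
    (tl hd : E → V) (g : E → B) : Prop :=
  ∀ v : V, ∑ e ∈ Finset.univ.filter (fun e => tl e = v), g e
         = ∑ e ∈ Finset.univ.filter (fun e => hd e = v), g e

/-- The rank `r⟨X⟩ = |V| - c⟨X⟩` of the spanning subgraph `(V, X)`, where
`c⟨X⟩` is its number of connected components. -/
noncomputable def grank {V E : Type} [Fintype V] (tl hd : E → V) (X : Finset E) : ℕ :=
  Fintype.card V -
    Nat.card (Quot (fun a b : V =>
      ∃ e ∈ X, (tl e = a ∧ hd e = b) ∨ (tl e = b ∧ hd e = a)))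

set_option linter.unusedSectionVars false

namespace Stmt8Aux

open Finset

def grel {V E : Type} (tl hd : E → V) (X : Finset E) : V → V → Prop :=
  fun a b => ∃ e ∈ X, (tl e = a ∧ hd e = b) ∨ (tl e = b ∧ hd e = a)

lemma card_dom_eq {G H : Type*} [AddGroup G] [AddGroup H] (f : G →+ H) :
    Nat.card G = Nat.card f.range * Nat.card f.ker := by
  rw [AddSubgroup.card_eq_card_quotient_mul_card_addSubgroup f.ker,
    Nat.card_congr (QuotientAddGroup.quotientKerEquivRange f).toEquiv]

section Tension

variable {V E A : Type} [Fintype V] [Fintype E] [AddCommGroup A] [Fintype A]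

/-- coboundary map from potentials on X-components -/
noncomputable def dX (tl hd : E → V) (X : Finset E) :
    ((Quot (grel tl hd X)) → A) →+ (E → A) :=
  AddMonoidHom.mk' (fun p e => p (Quot.mk _ (tl e)) - p (Quot.mk _ (hd e)))
    (by intro p q; funext e; simp only [Pi.add_apply]; abel)

lemma range_dX (tl hd : E → V) (X : Finset E) (f : E → A) :
    f ∈ (dX tl hd X (A := A)).range ↔ IsTension tl hd f ∧ ∀ e ∈ X, f e = 0 := by
  constructor
  · rintro ⟨pb, rfl⟩
    refine ⟨⟨fun v => pb (Quot.mk _ v), fun e => rfl⟩, fun e he => ?_⟩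
    show pb (Quot.mk _ (tl e)) - pb (Quot.mk _ (hd e)) = 0
    rw [Quot.sound ⟨e, he, Or.inl ⟨rfl, rfl⟩⟩, sub_self]
  · rintro ⟨⟨pot, hpot⟩, hvan⟩
    have hconst : ∀ a b, grel tl hd X a b → pot a = pot b := by
      rintro a b ⟨e, he, ⟨ha, hb⟩ | ⟨ha, hb⟩⟩
      · have := hvan e he; rw [hpot e, ha, hb] at this
        exact sub_eq_zero.mp this
      · have := hvan e he; rw [hpot e, ha, hb] at this
        exact (sub_eq_zero.mp this).symm
    exact ⟨Quot.lift pot hconst, by funext e; exact (hpot e).symm⟩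

noncomputable def kerEquiv (tl hd : E → V) (X : Finset E) :
    (dX tl hd X (A := A)).ker ≃ ((Quot (grel tl hd (univ : Finset E))) → A) where
  toFun x := Quot.lift (fun v => x.1 (Quot.mk _ v)) (by
    rintro a b ⟨e, -, ⟨ha, hb⟩ | ⟨ha, hb⟩⟩
    · have hx := congrFun (AddMonoidHom.mem_ker.mp x.2) e
      simp only [dX, AddMonoidHom.mk'_apply, Pi.zero_apply] at hx
      rw [← ha, ← hb]; exact sub_eq_zero.mp hx
    · have hx := congrFun (AddMonoidHom.mem_ker.mp x.2) e
      simp only [dX, AddMonoidHom.mk'_apply, Pi.zero_apply] at hx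
      rw [← ha, ← hb]; exact (sub_eq_zero.mp hx).symm)
  invFun h := ⟨Quot.lift (fun v => h (Quot.mk _ v)) (by
      rintro a b hab
      have : Quot.mk (grel tl hd (univ : Finset E)) a = Quot.mk _ b := by
        obtain ⟨e, -, he⟩ := hab
        exact Quot.sound ⟨e, mem_univ e, he⟩
      exact congrArg h this), by
    rw [AddMonoidHom.mem_ker]
    funext e
    show h (Quot.mk _ (tl e)) - h (Quot.mk _ (hd e)) = 0
    rw [Quot.sound ⟨e, mem_univ e, Or.inl ⟨rfl, rfl⟩⟩, sub_self]⟩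
  left_inv x := by
    apply Subtype.ext
    funext k
    induction k using Quot.ind
    rfl
  right_inv h := by
    funext k
    induction k using Quot.ind
    rfl

lemma tension_count (tl hd : E → V) (X : Finset E) :
    (Fintype.card A) ^ Nat.card (Quot (grel tl hd X)) =
      Nat.card {f : E → A // IsTension tl hd f ∧ ∀ e ∈ X, f e = 0} *
        (Fintype.card A) ^ Nat.card (Quot (grel tl hd (univ : Finset E))) := by
  haveI : Finite (Quot (grel tl hd X)) :=
    Finite.of_surjective (Quot.mk _) (fun q => Quot.exists_rep q)
  have h1 : Nat.card ((Quot (grel tl hd X)) → A)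
      = Nat.card (dX tl hd X (A := A)).range * Nat.card (dX tl hd X (A := A)).ker := by
    rw [AddSubgroup.card_eq_card_quotient_mul_card_addSubgroup (dX tl hd X (A := A)).ker,
      Nat.card_congr (QuotientAddGroup.quotientKerEquivRange _).toEquiv]
  rw [Nat.card_fun, Nat.card_eq_fintype_card] at h1
  rw [h1]
  congr 1
  · exact Nat.card_congr (Equiv.subtypeEquivRight (range_dX tl hd X))
  · rw [Nat.card_congr (kerEquiv tl hd X (A := A)), Nat.card_fun, Nat.card_eq_fintype_card]

end Tension

section Flow

variable {V E B : Type} [Fintype V] [Fintype E] [DecidableEq V] [DecidableEq E]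
  [AddCommGroup B] [Fintype B]

/-- boundary map -/
noncomputable def bd (tl hd : E → V) : (E → B) →+ (V → B) :=
  AddMonoidHom.mk' (fun g v =>
      (∑ e ∈ univ.filter (fun e => tl e = v), g e)
        - ∑ e ∈ univ.filter (fun e => hd e = v), g e)
    (by intro g h; funext v; simp only [Pi.add_apply, Finset.sum_add_distrib]; abel)

/-- subgroup of edge-functions vanishing on Y -/
def GZ (Y : Finset E) : AddSubgroup (E → B) where
  carrier := {g | ∀ e ∈ Y, g e = 0}
  zero_mem' := fun e _ => rfl
  add_mem' := by intro a b ha hb e he; simp [ha e he, hb e he]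
  neg_mem' := by intro a ha e he; simp [ha e he]

noncomputable def bdZ (tl hd : E → V) (Y : Finset E) : GZ (B := B) Y →+ (V → B) :=
  (bd tl hd).comp (GZ Y).subtype

noncomputable def kerFlowEquiv (tl hd : E → V) (Y : Finset E) :
    (bdZ (B := B) tl hd Y).ker ≃ {g : E → B // IsFlow tl hd g ∧ ∀ e ∈ Y, g e = 0} where
  toFun x := ⟨x.1.1, by
      intro v
      have hx := congrFun (AddMonoidHom.mem_ker.mp x.2) v
      simp only [bdZ, bd, AddMonoidHom.coe_comp, AddMonoidHom.mk'_apply,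
        AddSubgroup.coe_subtype, Function.comp_apply, Pi.zero_apply] at hx
      exact sub_eq_zero.mp hx, x.1.2⟩
  invFun y := ⟨⟨y.1, y.2.2⟩, by
    rw [AddMonoidHom.mem_ker]; funext v; exact sub_eq_zero.mpr (y.2.1 v)⟩
  left_inv x := rfl
  right_inv y := rfl

/-- the class-sum map -/
noncomputable def Smap (tl hd : E → V) (Y : Finset E) :
    (V → B) →+ ((Quot (grel tl hd Yᶜ)) → B) := by
  classical
  exact AddMonoidHom.mk'
    (fun h k => ∑ v ∈ univ.filter (fun v => Quot.mk _ v = k), h v)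
    (by intro g h; funext k; simp [Finset.sum_add_distrib])

lemma edge_delta (tl hd : E → V) (Y : Finset E) (e : E) (he : e ∈ Yᶜ) (c : B) :
    (fun v => (if v = tl e then c else 0) - (if v = hd e then c else 0))
      ∈ (bdZ (B := B) tl hd Y).range := by
  refine ⟨⟨fun e' => if e' = e then c else 0, ?_⟩, ?_⟩
  · intro e' he'
    show (if e' = e then c else 0) = 0
    rw [if_neg]
    rintro rfl
    exact (mem_compl.mp he) he'
  · funext v
    show (∑ e' ∈ univ.filter (fun e' => tl e' = v), if e' = e then c else 0)
        - (∑ e' ∈ univ.filter (fun e' => hd e' = v), if e' = e then c else 0) = _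
    rw [Finset.sum_ite_eq' _ e (fun _ => c), Finset.sum_ite_eq' _ e (fun _ => c)]
    simp only [mem_filter, mem_univ, true_and]
    congr 1 <;> simp [eq_comm]

lemma delta_mem (tl hd : E → V) (Y : Finset E) {a b : V}
    (hab : Quot.mk (grel tl hd Yᶜ) a = Quot.mk (grel tl hd Yᶜ) b) (c : B) :
    (fun v => (if v = a then c else 0) - (if v = b then c else 0))
      ∈ (bdZ (B := B) tl hd Y).range := by
  have h := Quot.eqvGen_exact hab
  clear hab
  induction h with
  | rel x y hr =>
    obtain ⟨e, he, ⟨hx, hy⟩ | ⟨hx, hy⟩⟩ := hr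
    · rw [← hx, ← hy]; exact edge_delta tl hd Y e he c
    · have h1 := neg_mem (edge_delta tl hd Y e he c)
      convert h1 using 1
      funext v
      rw [← hx, ← hy]
      simp [neg_sub]
  | refl x =>
    have : (fun v => (if v = x then c else 0) - (if v = x then c else 0)) = (0 : V → B) := by
      funext v; exact sub_self _
    rw [this]; exact zero_mem _
  | symm x y _ ih =>
    have h1 := neg_mem ih
    convert h1 using 1
    funext v
    simp [neg_sub]
  | trans x y z _ _ ih1 ih2 =>
    have h1 := add_mem ih1 ih2
    convert h1 using 1
    funext v
    simp only [Pi.add_apply]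
    abel

lemma mem_range_bdZ_iff (tl hd : E → V) (Y : Finset E) (h : V → B) :
    h ∈ (bdZ (B := B) tl hd Y).range ↔ Smap tl hd Y h = 0 := by
  classical
  constructor
  · rintro ⟨⟨g, hg⟩, rfl⟩
    funext k
    have key : ∀ F : E → V,
        (∑ v ∈ univ.filter (fun v => Quot.mk (grel tl hd Yᶜ) v = k),
          ∑ e ∈ univ.filter (fun e => F e = v), g e)
        = ∑ e ∈ univ.filter (fun e => Quot.mk (grel tl hd Yᶜ) (F e) = k), g e := by
      intro F
      rw [Finset.sum_fiberwise_eq_sum_filter univ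
        (univ.filter (fun v => Quot.mk (grel tl hd Yᶜ) v = k)) F g]
      congr 1
      ext e
      simp
    have hS : Smap (B := B) tl hd Y (bdZ tl hd Y ⟨g, hg⟩) k
        = (∑ e ∈ univ.filter (fun e => Quot.mk (grel tl hd Yᶜ) (tl e) = k), g e)
          - ∑ e ∈ univ.filter (fun e => Quot.mk (grel tl hd Yᶜ) (hd e) = k), g e := by
      show (∑ v ∈ univ.filter (fun v => Quot.mk (grel tl hd Yᶜ) v = k),
          ((∑ e ∈ univ.filter (fun e => tl e = v), g e)
            - ∑ e ∈ univ.filter (fun e => hd e = v), g e)) = _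
      rw [Finset.sum_sub_distrib, key tl, key hd]
    rw [hS, Pi.zero_apply, sub_eq_zero, Finset.sum_filter, Finset.sum_filter]
    apply Finset.sum_congr rfl
    intro e _
    by_cases he : e ∈ Y
    · rw [hg e he]; simp
    · have heZ : e ∈ Yᶜ := mem_compl.mpr he
      rw [Quot.sound ⟨e, heZ, Or.inl ⟨rfl, rfl⟩⟩]
  · intro hker
    have hsum : h = ∑ v ∈ univ, (fun w =>
        (if w = v then h v else 0)
          - (if w = (Quot.mk (grel tl hd Yᶜ) v).out then h v else 0)) := by
      funext w
      rw [Finset.sum_apply]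
      rw [Finset.sum_sub_distrib]
      have h1 : (∑ v ∈ univ, if w = v then h v else 0) = h w := by
        rw [Finset.sum_ite_eq]; simp
      have h2 : (∑ v ∈ univ,
          if w = (Quot.mk (grel tl hd Yᶜ) v).out then h v else 0) = 0 := by
        rw [← Finset.sum_filter]
        by_cases hw : (Quot.mk (grel tl hd Yᶜ) w).out = w
        · have hset : univ.filter (fun v => w = (Quot.mk (grel tl hd Yᶜ) v).out)
              = univ.filter (fun v =>
                  Quot.mk (grel tl hd Yᶜ) v = Quot.mk (grel tl hd Yᶜ) w) := by
            ext v
            simp only [mem_filter, mem_univ, true_and]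
            constructor
            · intro h1; rw [h1, Quot.out_eq]
            · intro h1; rw [h1]; exact hw.symm
          rw [hset]
          have := congrFun hker (Quot.mk (grel tl hd Yᶜ) w)
          simpa only [Smap, AddMonoidHom.mk'_apply, Pi.zero_apply] using this
        · have hset : univ.filter (fun v => w = (Quot.mk (grel tl hd Yᶜ) v).out)
              = (∅ : Finset V) := by
            apply Finset.filter_eq_empty_iff.mpr
            intro v _ h1
            apply hw
            have h2 : Quot.mk (grel tl hd Yᶜ) v = Quot.mk (grel tl hd Yᶜ) w := by
              rw [h1, Quot.out_eq]
            rw [← h2, ← h1]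
          rw [hset, Finset.sum_empty]
      rw [h1, h2, sub_zero]
    rw [hsum]
    exact AddSubgroup.sum_mem _ (fun v _ =>
      delta_mem tl hd Y (Quot.out_eq (Quot.mk (grel tl hd Yᶜ) v)).symm (h v))

lemma Smap_surj (tl hd : E → V) (Y : Finset E) :
    Function.Surjective (Smap (B := B) tl hd Y) := by
  classical
  intro k
  refine ⟨fun v => if (Quot.mk (grel tl hd Yᶜ) v).out = v
      then k (Quot.mk (grel tl hd Yᶜ) v) else 0, ?_⟩
  funext k0
  show (∑ v ∈ univ.filter (fun v => Quot.mk (grel tl hd Yᶜ) v = k0),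
      if (Quot.mk (grel tl hd Yᶜ) v).out = v
        then k (Quot.mk (grel tl hd Yᶜ) v) else 0) = k k0
  rw [Finset.sum_filter]
  have hcongr : ∀ v ∈ univ,
      (if Quot.mk (grel tl hd Yᶜ) v = k0 then
        (if (Quot.mk (grel tl hd Yᶜ) v).out = v
          then k (Quot.mk (grel tl hd Yᶜ) v) else 0) else 0)
      = if v = Quot.out k0 then k k0 else 0 := by
    intro v _
    by_cases h1 : v = Quot.out k0
    · subst h1
      simp [Quot.out_eq]
    · rw [if_neg h1]
      split_ifs with h2 h3
      · exact absurd (by rw [← h3, h2]) h1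
      · rfl
      · rfl
  rw [Finset.sum_congr rfl hcongr, Finset.sum_ite_eq' univ (Quot.out k0) (fun _ => k k0)]
  simp

noncomputable def GZEquiv (Y : Finset E) : GZ (B := B) Y ≃ (↥(Yᶜ) → B) where
  toFun g e := g.1 e.1
  invFun f := ⟨fun e => if he : e ∈ Yᶜ then f ⟨e, he⟩ else 0, by
    intro e he
    exact dif_neg (by simpa using he)⟩
  left_inv g := by
    apply Subtype.ext
    funext e
    show (if he : e ∈ Yᶜ then g.1 e else 0) = g.1 e
    by_cases he : e ∈ Yᶜ
    · exact dif_pos he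
    · rw [dif_neg he]
      exact (g.2 e (by simpa using he)).symm
  right_inv f := by
    funext e
    exact dif_pos e.2


lemma flow_count (tl hd : E → V) (Y : Finset E) :
    (Fintype.card B) ^ ((Yᶜ).card + Nat.card (Quot (grel tl hd Yᶜ)))
    = Nat.card {g : E → B // IsFlow tl hd g ∧ ∀ e ∈ Y, g e = 0}
        * (Fintype.card B) ^ (Fintype.card V) := by
  have c1 : Nat.card (GZ (B := B) Y) = (Fintype.card B) ^ ((Yᶜ).card) := by
    rw [Nat.card_congr (GZEquiv Y), Nat.card_fun, Nat.card_eq_fintype_card,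
      Nat.card_eq_fintype_card, Fintype.card_coe]
  have c2 := card_dom_eq (bdZ (B := B) tl hd Y)
  have c3 : Nat.card (bdZ (B := B) tl hd Y).ker
      = Nat.card {g : E → B // IsFlow tl hd g ∧ ∀ e ∈ Y, g e = 0} :=
    Nat.card_congr (kerFlowEquiv tl hd Y)
  have c4 : (bdZ (B := B) tl hd Y).range = (Smap (B := B) tl hd Y).ker := by
    ext h
    rw [AddMonoidHom.mem_ker]
    exact mem_range_bdZ_iff tl hd Y h
  have c5 := card_dom_eq (Smap (B := B) tl hd Y)
  have c6 : (Smap (B := B) tl hd Y).range = ⊤ :=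
    AddMonoidHom.range_eq_top.mpr (Smap_surj tl hd Y)
  haveI : Finite (Quot (grel tl hd Yᶜ)) :=
    Finite.of_surjective (Quot.mk _) (fun q => Quot.exists_rep q)
  rw [c6] at c5
  rw [AddSubgroup.card_top, Nat.card_fun, Nat.card_fun, Nat.card_eq_fintype_card (α := B),
    Nat.card_eq_fintype_card (α := V)] at c5
  rw [c4, c3] at c2
  rw [c1] at c2
  have harith : ∀ K F c : ℕ, K * F * c = F * (c * K) := fun K F c => by ring
  rw [pow_add, c2, c5]
  exact harith _ _ _

end Flow

section Counting

lemma cardT_eq {V E A : Type} [Fintype V] [Fintype E] [AddCommGroup A] [Fintype A]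
    (tl hd : E → V) (X : Finset E) :
    Nat.card {f : E → A // IsTension tl hd f ∧ ∀ e ∈ X, f e = 0}
      = (Fintype.card A) ^ (grank tl hd (Finset.univ : Finset E) - grank tl hd X) := by
  have hgr : ∀ W : Finset E, grank tl hd W
      = Fintype.card V - Nat.card (Quot (grel tl hd W)) := fun _ => rfl
  rcases le_or_gt (Fintype.card A) 1 with h1 | h2
  · have hp1 : Fintype.card A = 1 := le_antisymm h1 Fintype.card_pos
    haveI : Subsingleton A := Fintype.card_le_one_iff_subsingleton.mp h1
    rw [hp1, one_pow, Nat.card_eq_one_iff_unique]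
    exact ⟨⟨fun a b => Subtype.ext (Subsingleton.elim _ _)⟩,
      ⟨0, ⟨0, fun e => by simp⟩, fun e _ => rfl⟩⟩
  · have hc := tension_count (A := A) tl hd X
    set p := Fintype.card A with hp
    set cX := Nat.card (Quot (grel tl hd X)) with hcX
    set cE := Nat.card (Quot (grel tl hd (Finset.univ : Finset E))) with hcE
    set T := Nat.card {f : E → A // IsTension tl hd f ∧ ∀ e ∈ X, f e = 0} with hT
    clear_value p cX cE T
    have hle : cE ≤ cX := (Nat.pow_dvd_pow_iff_le_right h2).mp ⟨T, by rw [hc]; ring⟩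
    have hXV : cX ≤ Fintype.card V := by
      have := Nat.card_le_card_of_surjective (Quot.mk (grel tl hd X))
        (fun q => Quot.exists_rep q)
      rw [hcX]
      rwa [Nat.card_eq_fintype_card (α := V)] at this
    have hTval : T = p ^ (cX - cE) := by
      have h3 : T * p ^ cE = p ^ (cX - cE) * p ^ cE := by
        rw [← pow_add, Nat.sub_add_cancel hle, ← hc]
      exact Nat.eq_of_mul_eq_mul_right (pow_pos (Nat.lt_trans Nat.zero_lt_one h2) cE) h3
    rw [hTval, hgr, hgr, ← hcX, ← hcE]
    clear hgr hc hTval hT hcX hcE hp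
    congr 1
    omega

lemma cardF_eq {V E B : Type} [Fintype V] [Fintype E] [DecidableEq V] [DecidableEq E]
    [AddCommGroup B] [Fintype B] (tl hd : E → V) (Y : Finset E) :
    Nat.card {g : E → B // IsFlow tl hd g ∧ ∀ e ∈ Y, g e = 0}
      = (Fintype.card B) ^ ((Yᶜ).card - grank tl hd Yᶜ) := by
  have hgr : grank tl hd Yᶜ
      = Fintype.card V - Nat.card (Quot (grel tl hd Yᶜ)) := rfl
  rcases le_or_gt (Fintype.card B) 1 with h1 | h2
  · have hq1 : Fintype.card B = 1 := le_antisymm h1 Fintype.card_pos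
    haveI : Subsingleton B := Fintype.card_le_one_iff_subsingleton.mp h1
    rw [hq1, one_pow, Nat.card_eq_one_iff_unique]
    exact ⟨⟨fun a b => Subtype.ext (Subsingleton.elim _ _)⟩,
      ⟨0, fun v => by simp, fun e _ => rfl⟩⟩
  · have hc := flow_count (B := B) tl hd Y
    set q := Fintype.card B with hq
    set cZ := Nat.card (Quot (grel tl hd Yᶜ)) with hcZ
    set F := Nat.card {g : E → B // IsFlow tl hd g ∧ ∀ e ∈ Y, g e = 0} with hF
    clear_value q cZ F
    have hle : Fintype.card V ≤ (Yᶜ).card + cZ :=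
      (Nat.pow_dvd_pow_iff_le_right h2).mp ⟨F, by rw [hc]; ring⟩
    have hZV : cZ ≤ Fintype.card V := by
      have := Nat.card_le_card_of_surjective (Quot.mk (grel tl hd Yᶜ))
        (fun k => Quot.exists_rep k)
      rw [hcZ]
      rwa [Nat.card_eq_fintype_card (α := V)] at this
    have hFval : F = q ^ ((Yᶜ).card + cZ - Fintype.card V) := by
      have h3 : F * q ^ (Fintype.card V)
          = q ^ ((Yᶜ).card + cZ - Fintype.card V) * q ^ (Fintype.card V) := by
        rw [← pow_add, Nat.sub_add_cancel hle, ← hc]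
      exact Nat.eq_of_mul_eq_mul_right
        (pow_pos (Nat.lt_trans Nat.zero_lt_one h2) (Fintype.card V)) h3
    rw [hFval, hgr]
    clear hgr hc hFval hF hcZ hq
    congr 1
    omega

end Counting

end Stmt8Aux

/-- For edge subsets `X, Y ⊆ E`, the group `T_X × F_Y` of tension-flows `(f,g)`
with `f` vanishing on `X` and `g` vanishing on `Y` has cardinality
`p^{r(E) - r(X)} · q^{n(E - Y)}`. -/
theorem stmt8 {V E A B : Type} [Fintype V] [Fintype E] [DecidableEq V] [DecidableEq E]
    [AddCommGroup A] [Fintype A] [AddCommGroup B] [Fintype B]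
    (tl hd : E → V) (p q : ℕ) (hp : Fintype.card A = p) (hq : Fintype.card B = q)
    (X Y : Finset E) :
    Nat.card {fg : (E → A) × (E → B) //
        IsTension tl hd fg.1 ∧ IsFlow tl hd fg.2 ∧
        (∀ e ∈ X, fg.1 e = 0) ∧ ∀ e ∈ Y, fg.2 e = 0}
    = p ^ (grank tl hd Finset.univ - grank tl hd X) *
      q ^ ((Yᶜ).card - grank tl hd Yᶜ) := by
  subst hp
  subst hq
  have e1 : {fg : (E → A) × (E → B) //
        IsTension tl hd fg.1 ∧ IsFlow tl hd fg.2 ∧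
        (∀ e ∈ X, fg.1 e = 0) ∧ ∀ e ∈ Y, fg.2 e = 0}
      ≃ {f : E → A // IsTension tl hd f ∧ ∀ e ∈ X, f e = 0}
        × {g : E → B // IsFlow tl hd g ∧ ∀ e ∈ Y, g e = 0} :=
    (Equiv.subtypeEquivRight (fun fg => by tauto)).trans Equiv.subtypeProdEquivProd
  rw [Nat.card_congr e1, Nat.card_prod, Stmt8Aux.cardT_eq, Stmt8Aux.cardF_eq]
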